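/- If g₁ and g₂ are characteristically nilpotent Lie S-algebras, then their product by generators g₁ ×̲ g₂ is a characteristically nilpotent (and nonsplit) Lie algebra. -/

import Mathlib

open Module

noncomputable section

/-- Direct sum (product) of two Lie rings. -/
instance prodLieRing (L L' : Type*) [LieRing L] [LieRing L'] : LieRing (L × L') where
  bracket p q := (⁅p.1, q.1⁆, ⁅p.2, q.2⁆)
  add_lie x y z := Prod.ext (add_lie x.1 y.1 z.1) (add_lie x.2 y.2 z.2)
  lie_add x y z := Prod.ext (lie_add x.1 y.1 z.1) (lie_add x.2 y.2 z.2)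
  lie_self x := Prod.ext (lie_self x.1) (lie_self x.2)
  leibniz_lie x y z := Prod.ext (leibniz_lie x.1 y.1 z.1) (leibniz_lie x.2 y.2 z.2)

instance prodLieAlgebra (R L L' : Type*) [CommRing R] [LieRing L] [LieRing L']
    [LieAlgebra R L] [LieAlgebra R L'] : LieAlgebra R (L × L') where
  lie_smul t x y := Prod.ext (lie_smul t x.1 y.1) (lie_smul t x.2 y.2)

/-- A Lie algebra is nonsplit if it is not the direct sum of two nonzero ideals. -/
def LieAlgebra.Nonsplit (R L : Type*) [CommRing R] [LieRing L] [LieAlgebra R L] : Prop :=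
  ¬ ∃ I J : LieIdeal R L, I ≠ ⊥ ∧ J ≠ ⊥ ∧ I ⊓ J = ⊥ ∧ I ⊔ J = ⊤

/-- `g` is nonabelian: some bracket is nonzero. -/
def LieAlgebra.Nonabelian (L : Type*) [LieRing L] : Prop := ∃ x y : L, ⁅x, y⁆ ≠ 0

/-- `L` is the product by generators `g1 ×̲ g2`: the central extension of `g1 ⊕ g2`
by `ℂ^(n1 n2)` given by the cocycle pairing the generators of `g1` with those of `g2`. -/
structure IsProductByGenerators
    (L g1 g2 : Type*) [LieRing L] [LieAlgebra ℂ L]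
    [LieRing g1] [LieAlgebra ℂ g1] [LieRing g2] [LieAlgebra ℂ g2] where
  m1 : ℕ
  m2 : ℕ
  n1 : ℕ
  n2 : ℕ
  two_le_n1 : 2 ≤ n1
  two_le_n2 : 2 ≤ n2
  n1_le : n1 ≤ m1
  n2_le : n2 ≤ m2
  /-- an adapted basis of `g1` -/
  b1 : Basis (Fin m1) ℂ g1
  /-- an adapted basis of `g2` -/
  b2 : Basis (Fin m2) ℂ g2
  /-- the first `n1` basis vectors generate `g1` -/
  gen1 : Submodule.span ℂ (⇑b1 '' {i : Fin m1 | (i : ℕ) < n1}) ⊔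
      (LieAlgebra.derivedSeries ℂ g1 1).toSubmodule = ⊤
  gen2 : Submodule.span ℂ (⇑b2 '' {i : Fin m2 | (i : ℕ) < n2}) ⊔
      (LieAlgebra.derivedSeries ℂ g2 1).toSubmodule = ⊤
  /-- the remaining basis vectors span the derived subalgebra -/
  adapted1 : (LieAlgebra.derivedSeries ℂ g1 1).toSubmodule ≤
      Submodule.span ℂ (⇑b1 '' {i : Fin m1 | n1 ≤ (i : ℕ)})
  adapted2 : (LieAlgebra.derivedSeries ℂ g2 1).toSubmodule ≤
      Submodule.span ℂ (⇑b2 '' {i : Fin m2 | n2 ≤ (i : ℕ)})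
  /-- the cocycle, as a bilinear map `g1 × g2 → ℂ^(n1 n2)` -/
  Φ : g1 →ₗ[ℂ] g2 →ₗ[ℂ] (Fin n1 → Fin n2 → ℂ)
  hΦ : ∀ i j, Φ (b1 i) (b2 j) =
      if h : (i : ℕ) < n1 ∧ (j : ℕ) < n2 then
        Pi.single (⟨i, h.1⟩ : Fin n1) (Pi.single (⟨j, h.2⟩ : Fin n2) (1 : ℂ)) else 0
  /-- the underlying linear identification of `L` with `g1 ⊕ g2 ⊕ ℂ^(n1 n2)` -/
  e : (g1 × g2 × (Fin n1 → Fin n2 → ℂ)) ≃ₗ[ℂ] L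
  bracket_eq : ∀ a a' : g1 × g2 × (Fin n1 → Fin n2 → ℂ),
      ⁅e a, e a'⁆ = e (⁅a.1, a'.1⁆, ⁅a.2.1, a'.2.1⁆, Φ a.1 a'.2.1 - Φ a'.1 a.2.1)

namespace IsProductByGenerators

variable {L g1 g2 : Type*} [LieRing L] [LieAlgebra ℂ L]
  [LieRing g1] [LieAlgebra ℂ g1] [LieRing g2] [LieAlgebra ℂ g2]
  (P : IsProductByGenerators L g1 g2)

/-- inclusion of `g1` -/
def ι₁ (x : g1) : L := P.e (x, 0, 0)
/-- inclusion of `g2` -/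
def ι₂ (y : g2) : L := P.e (0, y, 0)
/-- inclusion of the adjoined center `g3 = ℂ^(n1 n2)` -/
def ι₃ (v : Fin P.n1 → Fin P.n2 → ℂ) : L := P.e (0, 0, v)
/-- projection onto `g1` -/
def p₁ (z : L) : g1 := (P.e.symm z).1
/-- projection onto `g2` -/
def p₂ (z : L) : g2 := (P.e.symm z).2.1
/-- projection onto `g3` -/
def p₃ (z : L) : Fin P.n1 → Fin P.n2 → ℂ := (P.e.symm z).2.2

/-- the component `Dᵢⱼ = pᵢ ∘ D ∘ ιⱼ` of an endomorphism of the product. -/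
def D11 (D : L →ₗ[ℂ] L) (x : g1) : g1 := P.p₁ (D (P.ι₁ x))
def D21 (D : L →ₗ[ℂ] L) (x : g1) : g2 := P.p₂ (D (P.ι₁ x))
def D31 (D : L →ₗ[ℂ] L) (x : g1) : Fin P.n1 → Fin P.n2 → ℂ := P.p₃ (D (P.ι₁ x))
def D12 (D : L →ₗ[ℂ] L) (y : g2) : g1 := P.p₁ (D (P.ι₂ y))
def D22 (D : L →ₗ[ℂ] L) (y : g2) : g2 := P.p₂ (D (P.ι₂ y))
def D32 (D : L →ₗ[ℂ] L) (y : g2) : Fin P.n1 → Fin P.n2 → ℂ := P.p₃ (D (P.ι₂ y))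
def D13 (D : L →ₗ[ℂ] L) (v : Fin P.n1 → Fin P.n2 → ℂ) : g1 := P.p₁ (D (P.ι₃ v))
def D23 (D : L →ₗ[ℂ] L) (v : Fin P.n1 → Fin P.n2 → ℂ) : g2 := P.p₂ (D (P.ι₃ v))
def D33 (D : L →ₗ[ℂ] L) (v : Fin P.n1 → Fin P.n2 → ℂ) : Fin P.n1 → Fin P.n2 → ℂ :=
  P.p₃ (D (P.ι₃ v))

end IsProductByGenerators

/-- `IsDerivation D`: `D` satisfies the Leibniz rule. -/
def IsDerivation {L : Type*} [LieRing L] [LieAlgebra ℂ L] (D : L →ₗ[ℂ] L) : Prop :=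
  ∀ x y : L, D ⁅x, y⁆ = ⁅D x, y⁆ + ⁅x, D y⁆

/-- the descending sequence `g^{[k]}`, with `g^{[1]} = Der(g)(g)`,
`g^{[k+1]} = Der(g)(g^{[k]})`. -/
def derPow (g : Type*) [LieRing g] [LieAlgebra ℂ g] : ℕ → Submodule ℂ g
  | 0 => ⊤
  | k + 1 => Submodule.span ℂ
      {x | ∃ D : g →ₗ[ℂ] g, IsDerivation D ∧ ∃ y ∈ derPow g k, x = D y}

/-- characteristically nilpotent: `g^{[m]} = 0` for some `m`. -/
def CharacteristicallyNilpotent (g : Type*) [LieRing g] [LieAlgebra ℂ g] : Prop :=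
  ∃ m, 1 ≤ m ∧ derPow g m = ⊥

/-- An S-algebra: for any Lie algebra `g2` and any derivation `D` of `g1 ×̲ g2`,
the component `D₂₁ = p₂ ∘ D ∘ p₁` maps `g1` into `[g2, g2]`. -/
def IsSAlgebra (g1 : Type) [LieRing g1] [LieAlgebra ℂ g1] : Prop :=
  ∀ (g2 L : Type) (_ : LieRing g2) (_ : LieAlgebra ℂ g2) (_ : LieRing L)
    (_ : LieAlgebra ℂ L) (P : IsProductByGenerators L g1 g2) (D : L →ₗ[ℂ] L),
    IsDerivation D → ∀ x : g1, P.D21 D x ∈ LieAlgebra.derivedSeries ℂ g2 1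

/-- nilpotency index: smallest `k` with `C^k g = 0` (`C¹g = [g,g]`). -/
noncomputable def nilindex (g : Type*) [LieRing g] [LieAlgebra ℂ g] : ℕ :=
  sInf {k | LieModule.lowerCentralSeries ℂ g g k = ⊥}

/-- dimension as complex vector space -/
def fdim (g : Type*) [LieRing g] [LieAlgebra ℂ g] : ℕ := finrank ℂ g

/-- dimension of the center -/
def zdim (g : Type*) [LieRing g] [LieAlgebra ℂ g] : ℕ :=
  finrank ℂ (LieAlgebra.center ℂ g).toSubmodule

/-- dimension of the derived subalgebra `C¹g = [g,g]` -/
def ddim (g : Type*) [LieRing g] [LieAlgebra ℂ g] : ℕ :=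
  finrank ℂ (LieAlgebra.derivedSeries ℂ g 1).toSubmodule

/-- minimal number of generators of a nilpotent Lie algebra: `dim g/[g,g]` -/
def gdim (g : Type*) [LieRing g] [LieAlgebra ℂ g] : ℕ :=
  finrank ℂ (g ⧸ (LieAlgebra.derivedSeries ℂ g 1).toSubmodule)

def FinDim (g : Type*) [LieRing g] [LieAlgebra ℂ g] : Prop := FiniteDimensional ℂ g

/-- existence of a Lie algebra isomorphism -/
def LieIso (L L' : Type*) [LieRing L] [LieAlgebra ℂ L] [LieRing L'] [LieAlgebra ℂ L'] : Prop :=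
  Nonempty (L ≃ₗ⁅ℂ⁆ L')

section AuxGeneric

open Submodule LieAlgebra

theorem map_mem_of_span {M N : Type*} [AddCommGroup M] [Module ℂ M] [AddCommGroup N]
    [Module ℂ N] (f : M →ₗ[ℂ] N) (s : Set M) (p : Submodule ℂ N) (h : ∀ x ∈ s, f x ∈ p) :
    ∀ x ∈ Submodule.span ℂ s, f x ∈ p := fun x hx =>
  Submodule.span_le.2 (fun y hy => (Submodule.mem_comap (f := f)).2 (h y hy)) hx

variable {g : Type*} [LieRing g] [LieAlgebra ℂ g]

theorem C1_eq_span : ((LieAlgebra.derivedSeries ℂ g 1).toSubmodule : Submodule ℂ g) =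
    Submodule.span ℂ {z : g | ∃ a b : g, ⁅a, b⁆ = z} := by
  rw [LieAlgebra.derivedSeries_def, LieAlgebra.derivedSeriesOfIdeal_succ,
    LieAlgebra.derivedSeriesOfIdeal_zero, LieSubmodule.lieIdeal_oper_eq_linear_span']
  congr 1
  ext z
  simp

theorem lie_mem_C1 (a b : g) : ⁅a, b⁆ ∈ (LieAlgebra.derivedSeries ℂ g 1).toSubmodule := by
  rw [C1_eq_span]; exact Submodule.subset_span ⟨a, b, rfl⟩

theorem C1_eq_lcs : (LieAlgebra.derivedSeries ℂ g 1 : LieSubmodule ℂ g g) =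
    LieModule.lowerCentralSeries ℂ g g 1 := by
  rw [LieAlgebra.derivedSeries_def, LieAlgebra.derivedSeriesOfIdeal_succ,
    LieAlgebra.derivedSeriesOfIdeal_zero, LieModule.lowerCentralSeries_succ, LieModule.lowerCentralSeries_zero]

/-- A centroid-type map with image in the derived subalgebra descends the lower
central series, hence is nilpotent. -/
theorem centroid_pow_eq_zero (f : g →ₗ[ℂ] g)
    (hf : ∀ x y : g, f ⁅x, y⁆ = ⁅f x, y⁆)
    (hf1 : ∀ x, f x ∈ (LieAlgebra.derivedSeries ℂ g 1).toSubmodule)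
    (K : ℕ) (hK : LieModule.lowerCentralSeries ℂ g g K = ⊥) : ∀ x, (f ^ K) x = 0 := by
  have step : ∀ j (x : g), x ∈ (LieModule.lowerCentralSeries ℂ g g j).toSubmodule →
      f x ∈ (LieModule.lowerCentralSeries ℂ g g (j + 1)).toSubmodule := by
    intro j
    cases j with
    | zero => intro x _; have := hf1 x; rw [C1_eq_lcs] at this; exact this
    | succ j =>
      intro x hx
      rw [LieModule.lowerCentralSeries_succ, LieSubmodule.lieIdeal_oper_eq_linear_span'] at hx
      refine map_mem_of_span f _ _ ?_ x hx
      rintro _ ⟨z, -, n, hn, rfl⟩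
      rw [hf]
      have h2 : ∀ w ∈ ((LieAlgebra.derivedSeries ℂ g 1).toSubmodule : Submodule ℂ g),
          ⁅w, n⁆ ∈ (LieModule.lowerCentralSeries ℂ g g (j + 1 + 1)).toSubmodule := by
        intro w hw
        rw [C1_eq_span] at hw
        refine map_mem_of_span ((LieModule.toEnd ℂ g g : g →ₗ[ℂ] Module.End ℂ g).flip n)
          _ _ ?_ w hw
        rintro _ ⟨a, b, rfl⟩
        show ⁅⁅a, b⁆, n⁆ ∈ _
        rw [lie_lie]
        have hbn : ⁅b, n⁆ ∈ LieModule.lowerCentralSeries ℂ g g (j + 1) := by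
          rw [LieModule.lowerCentralSeries_succ]
          exact LieSubmodule.lie_mem_lie (LieSubmodule.mem_top b) hn
        have han : ⁅a, n⁆ ∈ LieModule.lowerCentralSeries ℂ g g (j + 1) := by
          rw [LieModule.lowerCentralSeries_succ]
          exact LieSubmodule.lie_mem_lie (LieSubmodule.mem_top a) hn
        refine sub_mem ?_ ?_
        · rw [LieModule.lowerCentralSeries_succ]
          exact LieSubmodule.lie_mem_lie (LieSubmodule.mem_top a) hbn
        · rw [LieModule.lowerCentralSeries_succ]
          exact LieSubmodule.lie_mem_lie (LieSubmodule.mem_top b) han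
      exact h2 (f z) (hf1 z)
  have pow_mem : ∀ k (x : g), (f ^ k) x ∈ (LieModule.lowerCentralSeries ℂ g g k).toSubmodule := by
    intro k
    induction k with
    | zero => intro x; simp [LieModule.lowerCentralSeries_zero]
    | succ k ih =>
      intro x
      rw [pow_succ']
      exact step k _ (ih x)
  intro x
  have := pow_mem K x
  rw [hK] at this
  simpa using this

theorem fix_eq_zero {M : Type*} [AddCommGroup M] [Module ℂ M] (q : M →ₗ[ℂ] M) (K : ℕ)
    (hq : ∀ y, (q ^ K) y = 0) {x : M} (hx : q x = x) : x = 0 := by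
  have h : ∀ k, (q ^ k) x = x := by
    intro k
    induction k with
    | zero => simp
    | succ k ih => rw [pow_succ', Module.End.mul_apply, ih, hx]
  rw [← h K, hq]

theorem derPow_zero' : derPow g 0 = ⊤ := rfl

theorem mem_derPow_succ {D : g →ₗ[ℂ] g} (hD : IsDerivation D) {k : ℕ} {y : g}
    (hy : y ∈ derPow g k) : D y ∈ derPow g (k + 1) :=
  Submodule.subset_span ⟨D, hD, y, hy, rfl⟩

theorem derPow_succ_le : ∀ k, derPow g (k + 1) ≤ derPow g k
  | 0 => le_top
  | (k + 1) => by
    refine Submodule.span_le.2 ?_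
    rintro _ ⟨D, hD, y, hy, rfl⟩
    exact Submodule.subset_span ⟨D, hD, y, derPow_succ_le k hy, rfl⟩

theorem derPow_le {k l : ℕ} (h : k ≤ l) : derPow g l ≤ derPow g k := by
  induction l with
  | zero => rw [Nat.le_zero.1 h]
  | succ l ih =>
    rcases Nat.lt_or_ge k (l + 1) with h' | h'
    · exact le_trans (derPow_succ_le l) (ih (Nat.lt_succ_iff.1 h'))
    · rw [le_antisymm h h']

theorem derPow_eq_bot_of_le {m k : ℕ} (h : derPow g m = ⊥) (hmk : m ≤ k) :
    derPow g k = ⊥ :=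
  le_bot_iff.1 (h ▸ derPow_le hmk)

theorem isDerivation_ad (x : g) : IsDerivation (LieAlgebra.ad ℂ g x) := by
  intro a b
  simp only [LieAlgebra.ad_apply]
  exact leibniz_lie x a b

theorem C1_le_derPow_one : ((LieAlgebra.derivedSeries ℂ g 1).toSubmodule : Submodule ℂ g)
    ≤ derPow g 1 := by
  rw [C1_eq_span]
  refine Submodule.span_le.2 ?_
  rintro _ ⟨a, b, rfl⟩
  exact Submodule.subset_span ⟨LieAlgebra.ad ℂ g a, isDerivation_ad a, b, trivial, rfl⟩

theorem derivation_mem_C1 {D : g →ₗ[ℂ] g} (hD : IsDerivation D) :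
    ∀ x ∈ ((LieAlgebra.derivedSeries ℂ g 1).toSubmodule : Submodule ℂ g),
      D x ∈ (LieAlgebra.derivedSeries ℂ g 1).toSubmodule := by
  rw [C1_eq_span]
  refine map_mem_of_span D _ _ ?_
  rintro _ ⟨a, b, rfl⟩
  rw [hD]
  exact add_mem (Submodule.subset_span ⟨_, _, rfl⟩) (Submodule.subset_span ⟨_, _, rfl⟩)

theorem mem_of_single_mem {n1 n2 : ℕ} (p : Submodule ℂ (Fin n1 → Fin n2 → ℂ))
    (h : ∀ i j, Pi.single i (Pi.single j (1 : ℂ)) ∈ p) (v : Fin n1 → Fin n2 → ℂ) :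
    v ∈ p := by
  have hv : v = ∑ i, ∑ j, v i j • (Pi.single i (Pi.single j (1 : ℂ)) : Fin n1 → Fin n2 → ℂ) := by
    funext a b
    simp only [Finset.sum_apply, Pi.smul_apply, Pi.single_apply, smul_eq_mul]
    rw [Finset.sum_comm]
    simp [Finset.sum_ite_eq, Finset.sum_ite_eq', mul_ite, apply_ite (f := fun w : Fin n2 → ℂ => w b)]
    simp [Pi.single_apply, mul_ite, Finset.sum_ite_eq, Finset.sum_ite_eq', eq_comm]
  rw [hv]
  exact Submodule.sum_mem _ fun i _ => Submodule.sum_mem _ fun j _ =>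
    Submodule.smul_mem _ _ (h i j)

end AuxGeneric
namespace IsProductByGenerators

open Submodule LieAlgebra

variable {L g1 g2 : Type*} [LieRing L] [LieAlgebra ℂ L]
  [LieRing g1] [LieAlgebra ℂ g1] [LieRing g2] [LieAlgebra ℂ g2]
  (P : IsProductByGenerators L g1 g2)

/-- inclusion of `g1`, as a linear map -/
def i1 : g1 →ₗ[ℂ] L :=
  P.e.toLinearMap ∘ₗ LinearMap.inl ℂ g1 (g2 × (Fin P.n1 → Fin P.n2 → ℂ))

def i2 : g2 →ₗ[ℂ] L :=
  P.e.toLinearMap ∘ₗ (LinearMap.inr ℂ g1 (g2 × (Fin P.n1 → Fin P.n2 → ℂ))) ∘ₗ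
    LinearMap.inl ℂ g2 (Fin P.n1 → Fin P.n2 → ℂ)

def i3 : (Fin P.n1 → Fin P.n2 → ℂ) →ₗ[ℂ] L :=
  P.e.toLinearMap ∘ₗ (LinearMap.inr ℂ g1 (g2 × (Fin P.n1 → Fin P.n2 → ℂ))) ∘ₗ
    LinearMap.inr ℂ g2 (Fin P.n1 → Fin P.n2 → ℂ)

def q1 : L →ₗ[ℂ] g1 :=
  LinearMap.fst ℂ g1 (g2 × (Fin P.n1 → Fin P.n2 → ℂ)) ∘ₗ P.e.symm.toLinearMap

def q2 : L →ₗ[ℂ] g2 :=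
  LinearMap.fst ℂ g2 (Fin P.n1 → Fin P.n2 → ℂ) ∘ₗ
    LinearMap.snd ℂ g1 (g2 × (Fin P.n1 → Fin P.n2 → ℂ)) ∘ₗ P.e.symm.toLinearMap

def q3 : L →ₗ[ℂ] (Fin P.n1 → Fin P.n2 → ℂ) :=
  LinearMap.snd ℂ g2 (Fin P.n1 → Fin P.n2 → ℂ) ∘ₗ
    LinearMap.snd ℂ g1 (g2 × (Fin P.n1 → Fin P.n2 → ℂ)) ∘ₗ P.e.symm.toLinearMap

theorem i1_apply (x : g1) : P.i1 x = P.e (x, 0, 0) := rfl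
theorem i2_apply (y : g2) : P.i2 y = P.e (0, y, 0) := rfl
theorem i3_apply (v : Fin P.n1 → Fin P.n2 → ℂ) : P.i3 v = P.e (0, 0, v) := rfl
theorem q1_apply (z : L) : P.q1 z = (P.e.symm z).1 := rfl
theorem q2_apply (z : L) : P.q2 z = (P.e.symm z).2.1 := rfl
theorem q3_apply (z : L) : P.q3 z = (P.e.symm z).2.2 := rfl

@[simp] theorem q1_i1 (x : g1) : P.q1 (P.i1 x) = x := by
  simp [q1_apply, i1_apply]
@[simp] theorem q2_i1 (x : g1) : P.q2 (P.i1 x) = 0 := by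
  simp [q2_apply, i1_apply]
@[simp] theorem q3_i1 (x : g1) : P.q3 (P.i1 x) = 0 := by
  simp [q3_apply, i1_apply]
@[simp] theorem q1_i2 (y : g2) : P.q1 (P.i2 y) = 0 := by
  simp [q1_apply, i2_apply]
@[simp] theorem q2_i2 (y : g2) : P.q2 (P.i2 y) = y := by
  simp [q2_apply, i2_apply]
@[simp] theorem q3_i2 (y : g2) : P.q3 (P.i2 y) = 0 := by
  simp [q3_apply, i2_apply]
@[simp] theorem q1_i3 (v) : P.q1 (P.i3 v) = 0 := by
  simp [q1_apply, i3_apply]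
@[simp] theorem q2_i3 (v) : P.q2 (P.i3 v) = 0 := by
  simp [q2_apply, i3_apply]
@[simp] theorem q3_i3 (v) : P.q3 (P.i3 v) = v := by
  simp [q3_apply, i3_apply]

theorem sum_eq (a : g1) (b : g2) (c : Fin P.n1 → Fin P.n2 → ℂ) :
    P.i1 a + P.i2 b + P.i3 c = P.e (a, b, c) := by
  rw [i1_apply, i2_apply, i3_apply, ← map_add, ← map_add]
  congr 1
  simp [Prod.ext_iff]

theorem decomp (z : L) : z = P.i1 (P.q1 z) + P.i2 (P.q2 z) + P.i3 (P.q3 z) := by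
  rw [P.sum_eq, q1_apply, q2_apply, q3_apply]
  exact (P.e.apply_symm_apply z).symm

theorem lie_i1_i1 (x x' : g1) : ⁅P.i1 x, P.i1 x'⁆ = P.i1 ⁅x, x'⁆ := by
  rw [i1_apply, i1_apply, i1_apply, P.bracket_eq]
  simp

theorem lie_i2_i2 (y y' : g2) : ⁅P.i2 y, P.i2 y'⁆ = P.i2 ⁅y, y'⁆ := by
  rw [i2_apply, i2_apply, i2_apply, P.bracket_eq]
  simp

theorem lie_i1_i2 (x : g1) (y : g2) : ⁅P.i1 x, P.i2 y⁆ = P.i3 (P.Φ x y) := by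
  rw [i1_apply, i2_apply, i3_apply, P.bracket_eq]
  simp

theorem lie_i2_i1 (y : g2) (x : g1) : ⁅P.i2 y, P.i1 x⁆ = -P.i3 (P.Φ x y) := by
  rw [← lie_skew, P.lie_i1_i2]

theorem lie_i1_i3 (x : g1) (v) : ⁅P.i1 x, P.i3 v⁆ = 0 := by
  rw [i1_apply, i3_apply, P.bracket_eq]
  simp

theorem lie_i3_i1 (x : g1) (v) : ⁅P.i3 v, P.i1 x⁆ = 0 := by
  rw [← lie_skew, P.lie_i1_i3, neg_zero]

theorem lie_i2_i3 (y : g2) (v) : ⁅P.i2 y, P.i3 v⁆ = 0 := by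
  rw [i2_apply, i3_apply, P.bracket_eq]
  simp

theorem lie_i3_i2 (y : g2) (v) : ⁅P.i3 v, P.i2 y⁆ = 0 := by
  rw [← lie_skew, P.lie_i2_i3, neg_zero]

theorem Φ_b1_zero {i : Fin P.m1} (hi : P.n1 ≤ (i : ℕ)) : P.Φ (P.b1 i) = 0 := by
  apply P.b2.ext
  intro j
  rw [P.hΦ]
  rw [dif_neg]
  · rfl
  · rintro ⟨h1, -⟩
    omega

theorem Φ_b2_zero {j : Fin P.m2} (hj : P.n2 ≤ (j : ℕ)) : P.Φ.flip (P.b2 j) = 0 := by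
  apply P.b1.ext
  intro i
  rw [LinearMap.flip_apply, P.hΦ]
  rw [dif_neg]
  · rfl
  · rintro ⟨-, h2⟩
    omega

theorem Φ_left_zero {x : g1}
    (hx : x ∈ ((LieAlgebra.derivedSeries ℂ g1 1).toSubmodule : Submodule ℂ g1)) :
    P.Φ x = 0 := by
  have h1 := P.adapted1 hx
  have h2 := map_mem_of_span P.Φ _ (⊥ : Submodule ℂ (g2 →ₗ[ℂ] (Fin P.n1 → Fin P.n2 → ℂ)))
    ?_ x h1
  · simpa using h2
  · rintro _ ⟨i, hi, rfl⟩
    simpa using P.Φ_b1_zero hi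

theorem Φ_right_zero {y : g2}
    (hy : y ∈ ((LieAlgebra.derivedSeries ℂ g2 1).toSubmodule : Submodule ℂ g2)) (x : g1) :
    P.Φ x y = 0 := by
  have h1 := P.adapted2 hy
  have h2 := map_mem_of_span P.Φ.flip _
    (⊥ : Submodule ℂ (g1 →ₗ[ℂ] (Fin P.n1 → Fin P.n2 → ℂ))) ?_ y h1
  · have : P.Φ.flip y = 0 := by simpa using h2
    have := congrArg (fun F => F x) this
    simpa using this
  · rintro _ ⟨j, hj, rfl⟩
    simpa using P.Φ_b2_zero hj

theorem single_eq_Φ (i : Fin P.n1) (j : Fin P.n2) :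
    (Pi.single i (Pi.single j (1 : ℂ)) : Fin P.n1 → Fin P.n2 → ℂ) =
      P.Φ (P.b1 ⟨i, lt_of_lt_of_le i.2 P.n1_le⟩) (P.b2 ⟨j, lt_of_lt_of_le j.2 P.n2_le⟩) := by
  rw [P.hΦ, dif_pos ⟨i.2, j.2⟩]

end IsProductByGenerators
namespace IsProductByGenerators

open Submodule LieAlgebra

variable {L g1 g2 : Type*} [LieRing L] [LieAlgebra ℂ L]
  [LieRing g1] [LieAlgebra ℂ g1] [LieRing g2] [LieAlgebra ℂ g2]
  (P : IsProductByGenerators L g1 g2)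

def c11 (T : L →ₗ[ℂ] L) : g1 →ₗ[ℂ] g1 := P.q1 ∘ₗ T ∘ₗ P.i1
def c21 (T : L →ₗ[ℂ] L) : g1 →ₗ[ℂ] g2 := P.q2 ∘ₗ T ∘ₗ P.i1
def c31 (T : L →ₗ[ℂ] L) : g1 →ₗ[ℂ] (Fin P.n1 → Fin P.n2 → ℂ) := P.q3 ∘ₗ T ∘ₗ P.i1
def c12 (T : L →ₗ[ℂ] L) : g2 →ₗ[ℂ] g1 := P.q1 ∘ₗ T ∘ₗ P.i2
def c22 (T : L →ₗ[ℂ] L) : g2 →ₗ[ℂ] g2 := P.q2 ∘ₗ T ∘ₗ P.i2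
def c32 (T : L →ₗ[ℂ] L) : g2 →ₗ[ℂ] (Fin P.n1 → Fin P.n2 → ℂ) := P.q3 ∘ₗ T ∘ₗ P.i2
def c13 (T : L →ₗ[ℂ] L) : (Fin P.n1 → Fin P.n2 → ℂ) →ₗ[ℂ] g1 := P.q1 ∘ₗ T ∘ₗ P.i3
def c23 (T : L →ₗ[ℂ] L) : (Fin P.n1 → Fin P.n2 → ℂ) →ₗ[ℂ] g2 := P.q2 ∘ₗ T ∘ₗ P.i3
def c33 (T : L →ₗ[ℂ] L) : (Fin P.n1 → Fin P.n2 → ℂ) →ₗ[ℂ] (Fin P.n1 → Fin P.n2 → ℂ) :=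
  P.q3 ∘ₗ T ∘ₗ P.i3

theorem T_i1 (T : L →ₗ[ℂ] L) (x : g1) :
    T (P.i1 x) = P.e (P.c11 T x, P.c21 T x, P.c31 T x) := by
  conv_lhs => rw [P.decomp (T (P.i1 x))]
  rw [P.sum_eq]
  rfl

theorem T_i2 (T : L →ₗ[ℂ] L) (y : g2) :
    T (P.i2 y) = P.e (P.c12 T y, P.c22 T y, P.c32 T y) := by
  conv_lhs => rw [P.decomp (T (P.i2 y))]
  rw [P.sum_eq]
  rfl

theorem T_i3 (T : L →ₗ[ℂ] L) (v : Fin P.n1 → Fin P.n2 → ℂ) :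
    T (P.i3 v) = P.e (P.c13 T v, P.c23 T v, P.c33 T v) := by
  conv_lhs => rw [P.decomp (T (P.i3 v))]
  rw [P.sum_eq]
  rfl

section Derivation

variable {D : L →ₗ[ℂ] L}

theorem der_i1_i1 (hD : IsDerivation D) (x x' : g1) :
    P.c11 D ⁅x, x'⁆ = ⁅P.c11 D x, x'⁆ + ⁅x, P.c11 D x'⁆ ∧
    P.c21 D ⁅x, x'⁆ = 0 ∧
    P.c31 D ⁅x, x'⁆ = P.Φ x (P.c21 D x') - P.Φ x' (P.c21 D x) := by
  have h := hD (P.i1 x) (P.i1 x')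
  rw [P.lie_i1_i1, P.T_i1, P.T_i1, P.T_i1, P.i1_apply, P.i1_apply,
      P.bracket_eq, P.bracket_eq, ← map_add] at h
  have ht := P.e.injective h
  refine ⟨?_, ?_, ?_⟩
  · have h1 := congrArg (fun t : g1 × g2 × (Fin P.n1 → Fin P.n2 → ℂ) => t.1) ht
    simpa using h1
  · have h1 := congrArg (fun t : g1 × g2 × (Fin P.n1 → Fin P.n2 → ℂ) => t.2.1) ht
    simpa using h1
  · have h1 := congrArg (fun t : g1 × g2 × (Fin P.n1 → Fin P.n2 → ℂ) => t.2.2) ht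
    simp at h1
    rw [h1]
    abel

theorem der_i2_i2 (hD : IsDerivation D) (y y' : g2) :
    P.c22 D ⁅y, y'⁆ = ⁅P.c22 D y, y'⁆ + ⁅y, P.c22 D y'⁆ ∧
    P.c12 D ⁅y, y'⁆ = 0 ∧
    P.c32 D ⁅y, y'⁆ = P.Φ (P.c12 D y) y' - P.Φ (P.c12 D y') y := by
  have h := hD (P.i2 y) (P.i2 y')
  rw [P.lie_i2_i2, P.T_i2, P.T_i2, P.T_i2, P.i2_apply, P.i2_apply,
      P.bracket_eq, P.bracket_eq, ← map_add] at h
  have ht := P.e.injective h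
  refine ⟨?_, ?_, ?_⟩
  · have h1 := congrArg (fun t : g1 × g2 × (Fin P.n1 → Fin P.n2 → ℂ) => t.2.1) ht
    simpa using h1
  · have h1 := congrArg (fun t : g1 × g2 × (Fin P.n1 → Fin P.n2 → ℂ) => t.1) ht
    simpa using h1
  · have h1 := congrArg (fun t : g1 × g2 × (Fin P.n1 → Fin P.n2 → ℂ) => t.2.2) ht
    simp at h1
    rw [h1]
    abel

theorem der_i1_i2 (hD : IsDerivation D) (x : g1) (y : g2) :
    P.c13 D (P.Φ x y) = ⁅x, P.c12 D y⁆ ∧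
    P.c23 D (P.Φ x y) = ⁅P.c21 D x, y⁆ ∧
    P.c33 D (P.Φ x y) = P.Φ (P.c11 D x) y + P.Φ x (P.c22 D y) := by
  have h := hD (P.i1 x) (P.i2 y)
  rw [P.lie_i1_i2, P.T_i3, P.T_i1, P.T_i2, P.i1_apply, P.i2_apply,
      P.bracket_eq, P.bracket_eq, ← map_add] at h
  have ht := P.e.injective h
  refine ⟨?_, ?_, ?_⟩
  · have h1 := congrArg (fun t : g1 × g2 × (Fin P.n1 → Fin P.n2 → ℂ) => t.1) ht
    simpa using h1
  · have h1 := congrArg (fun t : g1 × g2 × (Fin P.n1 → Fin P.n2 → ℂ) => t.2.1) ht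
    simpa using h1
  · have h1 := congrArg (fun t : g1 × g2 × (Fin P.n1 → Fin P.n2 → ℂ) => t.2.2) ht
    simp at h1
    rw [h1]

theorem c11_derivation (hD : IsDerivation D) : IsDerivation (P.c11 D) :=
  fun x x' => (P.der_i1_i1 hD x x').1

theorem c22_derivation (hD : IsDerivation D) : IsDerivation (P.c22 D) :=
  fun y y' => (P.der_i2_i2 hD y y').1

/-- `D₂₁` kills the derived subalgebra of `g1`. -/
theorem c21_C1 (hD : IsDerivation D) :
    ∀ x ∈ ((LieAlgebra.derivedSeries ℂ g1 1).toSubmodule : Submodule ℂ g1),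
      P.c21 D x = 0 := by
  intro x hx
  rw [C1_eq_span] at hx
  have := map_mem_of_span (P.c21 D) _ (⊥ : Submodule ℂ g2) ?_ x hx
  · simpa using this
  · rintro _ ⟨a, b, rfl⟩
    simp [(P.der_i1_i1 hD a b).2.1]

theorem c12_C1 (hD : IsDerivation D) :
    ∀ y ∈ ((LieAlgebra.derivedSeries ℂ g2 1).toSubmodule : Submodule ℂ g2),
      P.c12 D y = 0 := by
  intro y hy
  rw [C1_eq_span] at hy
  have := map_mem_of_span (P.c12 D) _ (⊥ : Submodule ℂ g1) ?_ y hy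
  · simpa using this
  · rintro _ ⟨a, b, rfl⟩
    simp [(P.der_i2_i2 hD a b).2.1]

/-- `D₃₁` kills the derived subalgebra of `g1`, given the S-property for `D₂₁`. -/
theorem c31_C1 (hD : IsDerivation D)
    (hS : ∀ x : g1, P.c21 D x ∈ (LieAlgebra.derivedSeries ℂ g2 1).toSubmodule) :
    ∀ x ∈ ((LieAlgebra.derivedSeries ℂ g1 1).toSubmodule : Submodule ℂ g1),
      P.c31 D x = 0 := by
  intro x hx
  rw [C1_eq_span] at hx
  have := map_mem_of_span (P.c31 D) _
    (⊥ : Submodule ℂ (Fin P.n1 → Fin P.n2 → ℂ)) ?_ x hx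
  · simpa using this
  · rintro _ ⟨a, b, rfl⟩
    have h := (P.der_i1_i1 hD a b).2.2
    rw [P.Φ_right_zero (hS b) a, P.Φ_right_zero (hS a) b] at h
    simp [h]

theorem c32_C1 (hD : IsDerivation D)
    (hS : ∀ y : g2, P.c12 D y ∈ (LieAlgebra.derivedSeries ℂ g1 1).toSubmodule) :
    ∀ y ∈ ((LieAlgebra.derivedSeries ℂ g2 1).toSubmodule : Submodule ℂ g2),
      P.c32 D y = 0 := by
  intro y hy
  rw [C1_eq_span] at hy
  have := map_mem_of_span (P.c32 D) _
    (⊥ : Submodule ℂ (Fin P.n1 → Fin P.n2 → ℂ)) ?_ y hy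
  · simpa using this
  · rintro _ ⟨a, b, rfl⟩
    have h := (P.der_i2_i2 hD a b).2.2
    rw [P.Φ_left_zero (hS a), P.Φ_left_zero (hS b)] at h
    simp [h]

end Derivation

end IsProductByGenerators
namespace IsProductByGenerators

open Submodule LieAlgebra

/-- transpose of a matrix-valued function -/
def tr (a b : ℕ) : (Fin a → Fin b → ℂ) →ₗ[ℂ] (Fin b → Fin a → ℂ) where
  toFun v := fun j i => v i j
  map_add' _ _ := rfl
  map_smul' _ _ := rfl

@[simp] theorem tr_apply {a b : ℕ} (v : Fin a → Fin b → ℂ) (j : Fin b) (i : Fin a) :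
    tr a b v j i = v i j := rfl

theorem tr_tr {a b : ℕ} (v : Fin a → Fin b → ℂ) : tr b a (tr a b v) = v := rfl

theorem tr_single {a b : ℕ} (i : Fin a) (j : Fin b) :
    tr a b (Pi.single i (Pi.single j (1 : ℂ))) = Pi.single j (Pi.single i 1) := by
  funext s t
  simp only [tr_apply, Pi.single_apply]
  by_cases h1 : s = j <;> by_cases h2 : t = i <;> simp [h1, h2, Pi.single_apply]

variable {L g1 g2 : Type*} [LieRing L] [LieAlgebra ℂ L]
  [LieRing g1] [LieAlgebra ℂ g1] [LieRing g2] [LieAlgebra ℂ g2]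
  (P : IsProductByGenerators L g1 g2)

def ΦSwap : g2 →ₗ[ℂ] g1 →ₗ[ℂ] (Fin P.n2 → Fin P.n1 → ℂ) where
  toFun y := tr P.n1 P.n2 ∘ₗ P.Φ.flip y
  map_add' a b := by ext x j i; simp
  map_smul' c a := by ext x j i; simp

theorem ΦSwap_apply (y : g2) (x : g1) : P.ΦSwap y x = tr P.n1 P.n2 (P.Φ x y) := rfl

def swapE : (g2 × g1 × (Fin P.n2 → Fin P.n1 → ℂ)) ≃ₗ[ℂ]
    (g1 × g2 × (Fin P.n1 → Fin P.n2 → ℂ)) where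
  toFun a := (a.2.1, a.1, -tr P.n2 P.n1 a.2.2)
  invFun t := (t.2.1, t.1, -tr P.n1 P.n2 t.2.2)
  left_inv a := by
    refine Prod.ext rfl (Prod.ext rfl ?_)
    show -tr P.n1 P.n2 (-tr P.n2 P.n1 a.2.2) = a.2.2
    rw [map_neg, neg_neg, tr_tr]
  right_inv t := by
    refine Prod.ext rfl (Prod.ext rfl ?_)
    show -tr P.n2 P.n1 (-tr P.n1 P.n2 t.2.2) = t.2.2
    rw [map_neg, neg_neg, tr_tr]
  map_add' a b := by
    refine Prod.ext rfl (Prod.ext rfl ?_)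
    show -tr P.n2 P.n1 (a.2.2 + b.2.2) = -tr P.n2 P.n1 a.2.2 + -tr P.n2 P.n1 b.2.2
    rw [map_add, neg_add]
  map_smul' c a := by
    refine Prod.ext rfl (Prod.ext rfl ?_)
    show -tr P.n2 P.n1 (c • a.2.2) = c • -tr P.n2 P.n1 a.2.2
    rw [map_smul, smul_neg]

/-- the swapped product structure `g2 ×̲ g1`. -/
def swap : IsProductByGenerators L g2 g1 where
  m1 := P.m2
  m2 := P.m1
  n1 := P.n2
  n2 := P.n1
  two_le_n1 := P.two_le_n2
  two_le_n2 := P.two_le_n1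
  n1_le := P.n2_le
  n2_le := P.n1_le
  b1 := P.b2
  b2 := P.b1
  gen1 := P.gen2
  gen2 := P.gen1
  adapted1 := P.adapted2
  adapted2 := P.adapted1
  Φ := P.ΦSwap
  hΦ := by
    intro j i
    rw [ΦSwap_apply, P.hΦ]
    by_cases h : (i : ℕ) < P.n1 ∧ (j : ℕ) < P.n2
    · rw [dif_pos h, dif_pos ⟨h.2, h.1⟩, tr_single]
    · rw [dif_neg h, dif_neg (fun hc => h ⟨hc.2, hc.1⟩), map_zero]
  e := P.swapE.trans P.e
  bracket_eq := by
    intro a a'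
    show ⁅P.e (P.swapE a), P.e (P.swapE a')⁆ = P.e (P.swapE _)
    rw [P.bracket_eq]
    congr 1
    refine Prod.ext rfl (Prod.ext rfl ?_)
    show P.Φ a.2.1 a'.1 - P.Φ a'.2.1 a.1 =
      -tr P.n2 P.n1 (P.ΦSwap a.1 a'.2.1 - P.ΦSwap a'.1 a.2.1)
    rw [map_sub, ΦSwap_apply, ΦSwap_apply, tr_tr, tr_tr, neg_sub]

theorem swap_iota1 (y : g2) : P.swap.ι₁ y = P.i2 y := by
  show P.e (P.swapE (y, 0, 0)) = P.e (0, y, 0)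
  congr 1
  refine Prod.ext rfl (Prod.ext rfl ?_)
  show -tr P.n2 P.n1 0 = (0 : Fin P.n1 → Fin P.n2 → ℂ)
  rw [map_zero, neg_zero]

theorem swap_D21 (D : L →ₗ[ℂ] L) (y : g2) : P.swap.D21 D y = P.c12 D y := by
  show P.swap.p₂ (D (P.swap.ι₁ y)) = P.c12 D y
  rw [P.swap_iota1]
  rfl

theorem D21_eq_c21 (D : L →ₗ[ℂ] L) (x : g1) : P.D21 D x = P.c21 D x := rfl

end IsProductByGenerators
namespace IsProductByGenerators

open Submodule LieAlgebra

/-- two-sided filtration on a factor. -/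
def Xf (g : Type*) [LieRing g] [LieAlgebra ℂ g] (K1 k : ℕ) : Submodule ℂ g :=
  derPow g k ⊔ ((LieAlgebra.derivedSeries ℂ g 1).toSubmodule ⊓ derPow g (k - K1))

theorem C1_le_Xf {g : Type*} [LieRing g] [LieAlgebra ℂ g] {K1 k : ℕ} (hk : k ≤ K1) :
    ((LieAlgebra.derivedSeries ℂ g 1).toSubmodule : Submodule ℂ g) ≤ Xf g K1 k := by
  refine le_trans ?_ le_sup_right
  rw [Nat.sub_eq_zero_of_le hk]
  exact le_inf (le_refl _) le_top

theorem Xf_le_C1 {g : Type*} [LieRing g] [LieAlgebra ℂ g] {K1 k m : ℕ}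
    (hb : derPow g m = ⊥) (hk : m ≤ k) :
    Xf g K1 k ≤ ((LieAlgebra.derivedSeries ℂ g 1).toSubmodule : Submodule ℂ g) :=
  sup_le (le_of_eq_of_le (derPow_eq_bot_of_le hb hk) bot_le) inf_le_left

variable {L g1 g2 : Type*} [LieRing L] [LieAlgebra ℂ L]
  [LieRing g1] [LieAlgebra ℂ g1] [LieRing g2] [LieAlgebra ℂ g2]
  (P : IsProductByGenerators L g1 g2)

/-- the filtration on the centre `g3` induced by the `derPow` filtrations of the factors. -/
def Vsub (k : ℕ) : Submodule ℂ (Fin P.n1 → Fin P.n2 → ℂ) :=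
  Submodule.span ℂ
    {v | ∃ a b x y, a + b = k ∧ x ∈ derPow g1 a ∧ y ∈ derPow g2 b ∧ v = P.Φ x y}

theorem Vsub_zero : P.Vsub 0 = ⊤ := by
  rw [eq_top_iff]
  intro v _
  refine mem_of_single_mem _ ?_ v
  intro i j
  rw [P.single_eq_Φ i j]
  exact Submodule.subset_span
    ⟨0, 0, _, _, rfl, Submodule.mem_top, Submodule.mem_top, rfl⟩

theorem Vsub_bot {m1' m2' k : ℕ} (h1 : derPow g1 m1' = ⊥) (h2 : derPow g2 m2' = ⊥)
    (hk : m1' + m2' ≤ k + 1) : P.Vsub k = ⊥ := by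
  rw [eq_bot_iff]
  refine Submodule.span_le.2 ?_
  rintro _ ⟨a, b, x, y, hab, hx, hy, rfl⟩
  rcases le_or_gt m1' a with h | h
  · have hx0 : x = 0 := by
      have := derPow_eq_bot_of_le h1 h ▸ hx
      simpa using this
    simp [hx0]
  · have hb : m2' ≤ b := by omega
    have hy0 : y = 0 := by
      have := derPow_eq_bot_of_le h2 hb ▸ hy
      simpa using this
    simp [hy0]

/-- the global filtration on `L`. -/
def Sf (K1 M k : ℕ) : Submodule ℂ L :=
  Submodule.map P.e.toLinearMap
    ((Xf g1 K1 k).prod ((Xf g2 K1 k).prod (P.Vsub (k - M))))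

theorem mem_Sf {K1 M k : ℕ} {a : g1} {b : g2} {c : Fin P.n1 → Fin P.n2 → ℂ}
    (ha : a ∈ Xf g1 K1 k) (hb : b ∈ Xf g2 K1 k) (hc : c ∈ P.Vsub (k - M)) :
    P.e (a, b, c) ∈ P.Sf K1 M k :=
  ⟨(a, b, c), ⟨ha, hb, hc⟩, rfl⟩

theorem Sf_elim {K1 M k : ℕ} {z : L} (hz : z ∈ P.Sf K1 M k) :
    ∃ a b c, a ∈ Xf g1 K1 k ∧ b ∈ Xf g2 K1 k ∧ c ∈ P.Vsub (k - M) ∧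
      z = P.e (a, b, c) := by
  obtain ⟨t, ht, rfl⟩ := hz
  exact ⟨t.1, t.2.1, t.2.2, ht.1, ht.2.1, ht.2.2, rfl⟩

theorem charNilpotent (hcn1 : CharacteristicallyNilpotent g1)
    (hcn2 : CharacteristicallyNilpotent g2)
    (hS1' : ∀ (D : L →ₗ[ℂ] L), IsDerivation D → ∀ x : g1,
      P.c21 D x ∈ (LieAlgebra.derivedSeries ℂ g2 1).toSubmodule)
    (hS2' : ∀ (D : L →ₗ[ℂ] L), IsDerivation D → ∀ y : g2,
      P.c12 D y ∈ (LieAlgebra.derivedSeries ℂ g1 1).toSubmodule) :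
    CharacteristicallyNilpotent L := by
  obtain ⟨m1', hm1, hb1⟩ := hcn1
  obtain ⟨m2', hm2, hb2⟩ := hcn2
  set M := max m1' m2' with hM
  set K1 := M + m1' + m2' with hK1
  set N := K1 + M with hN
  have hbM1 : derPow g1 M = ⊥ := derPow_eq_bot_of_le hb1 (le_max_left _ _)
  have hbM2 : derPow g2 M = ⊥ := derPow_eq_bot_of_le hb2 (le_max_right _ _)
  have step : ∀ (k : ℕ) (D : L →ₗ[ℂ] L), IsDerivation D →
      ∀ z ∈ P.Sf K1 M k, D z ∈ P.Sf K1 M (k + 1) := by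
    intro k D hD z hz
    obtain ⟨x, y, v, htx, hty, htv, rfl⟩ := P.Sf_elim hz
    have hB2 := hS1' D hD
    have hB1 := hS2' D hD
    rw [← P.sum_eq, map_add, map_add]
    have part1 : ∀ x' ∈ Xf g1 K1 k, D (P.i1 x') ∈ P.Sf K1 M (k + 1) := by
      intro x' hx'
      rcases Submodule.mem_sup.1 hx' with ⟨x1, hx1, x2, hx2, rfl⟩
      rw [map_add, map_add]
      refine Submodule.add_mem _ ?_ ?_
      · rcases le_or_gt m1' k with hk | hk
        · have h0 : x1 = 0 := by
            have := derPow_eq_bot_of_le hb1 hk ▸ hx1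
            simpa using this
          rw [h0]
          simp only [map_zero]
          exact Submodule.zero_mem _
        · rw [P.T_i1]
          refine P.mem_Sf ?_ ?_ ?_
          · exact Submodule.mem_sup_left (mem_derPow_succ (P.c11_derivation hD) hx1)
          · exact C1_le_Xf (by omega) (hB2 x1)
          · have h0 : k + 1 - M = 0 := by omega
            rw [h0, P.Vsub_zero]
            exact Submodule.mem_top
      · rw [P.T_i1]
        refine P.mem_Sf ?_ ?_ ?_
        · refine Submodule.mem_sup_right (Submodule.mem_inf.2 ⟨?_, ?_⟩)
          · exact derivation_mem_C1 (P.c11_derivation hD) _ hx2.1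
          · exact derPow_le (by omega : k + 1 - K1 ≤ (k - K1) + 1)
              (mem_derPow_succ (P.c11_derivation hD) hx2.2)
        · rw [P.c21_C1 hD _ hx2.1]
          exact Submodule.zero_mem _
        · rw [P.c31_C1 hD hB2 _ hx2.1]
          exact Submodule.zero_mem _
    have part2 : ∀ y' ∈ Xf g2 K1 k, D (P.i2 y') ∈ P.Sf K1 M (k + 1) := by
      intro y' hy'
      rcases Submodule.mem_sup.1 hy' with ⟨y1, hy1, y2, hy2, rfl⟩
      rw [map_add, map_add]
      refine Submodule.add_mem _ ?_ ?_
      · rcases le_or_gt m2' k with hk | hk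
        · have h0 : y1 = 0 := by
            have := derPow_eq_bot_of_le hb2 hk ▸ hy1
            simpa using this
          rw [h0]
          simp only [map_zero]
          exact Submodule.zero_mem _
        · rw [P.T_i2]
          refine P.mem_Sf ?_ ?_ ?_
          · exact C1_le_Xf (by omega) (hB1 y1)
          · exact Submodule.mem_sup_left (mem_derPow_succ (P.c22_derivation hD) hy1)
          · have h0 : k + 1 - M = 0 := by omega
            rw [h0, P.Vsub_zero]
            exact Submodule.mem_top
      · rw [P.T_i2]
        refine P.mem_Sf ?_ ?_ ?_
        · rw [P.c12_C1 hD _ hy2.1]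
          exact Submodule.zero_mem _
        · refine Submodule.mem_sup_right (Submodule.mem_inf.2 ⟨?_, ?_⟩)
          · exact derivation_mem_C1 (P.c22_derivation hD) _ hy2.1
          · exact derPow_le (by omega : k + 1 - K1 ≤ (k - K1) + 1)
              (mem_derPow_succ (P.c22_derivation hD) hy2.2)
        · rw [P.c32_C1 hD hB1 _ hy2.1]
          exact Submodule.zero_mem _
    have part3 : ∀ v' ∈ P.Vsub (k - M), D (P.i3 v') ∈ P.Sf K1 M (k + 1) := by
      intro v' hv'
      refine map_mem_of_span (D ∘ₗ P.i3) _ _ ?_ v' hv'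
      rintro _ ⟨a, b, xx, yy, hab, hxx, hyy, rfl⟩
      show D (P.i3 (P.Φ xx yy)) ∈ P.Sf K1 M (k + 1)
      rcases le_or_gt m1' a with ha | ha
      · have h0 : xx = 0 := by
          have := derPow_eq_bot_of_le hb1 ha ▸ hxx
          simpa using this
        rw [h0]
        simp only [map_zero, LinearMap.zero_apply]
        exact Submodule.zero_mem _
      rcases le_or_gt m2' b with hb | hb
      · have h0 : yy = 0 := by
          have := derPow_eq_bot_of_le hb2 hb ▸ hyy
          simpa using this
        rw [h0]
        simp only [map_zero]
        exact Submodule.zero_mem _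
      obtain ⟨e1, e2, e3⟩ := P.der_i1_i2 hD xx yy
      rw [P.T_i3, e1, e2, e3]
      refine P.mem_Sf ?_ ?_ ?_
      · exact C1_le_Xf (by omega) (lie_mem_C1 _ _)
      · exact C1_le_Xf (by omega) (lie_mem_C1 _ _)
      · rcases le_or_gt M k with hMk | hMk
        · have h1 : k + 1 - M = a + 1 + b := by omega
          rw [h1]
          refine Submodule.add_mem _ ?_ ?_
          · exact Submodule.subset_span
              ⟨a + 1, b, _, _, rfl, mem_derPow_succ (P.c11_derivation hD) hxx, hyy, rfl⟩
          · exact Submodule.subset_span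
              ⟨a, b + 1, _, _, by omega, hxx, mem_derPow_succ (P.c22_derivation hD) hyy, rfl⟩
        · have h0 : k + 1 - M = 0 := by omega
          rw [h0, P.Vsub_zero]
          exact Submodule.mem_top
    exact Submodule.add_mem _ (Submodule.add_mem _ (part1 x htx) (part2 y hty)) (part3 v htv)
  have main : ∀ k, derPow L k ≤ P.Sf K1 M k := by
    intro k
    induction k with
    | zero =>
      intro z _
      have hz : z = P.e (P.e.symm z) := (P.e.apply_symm_apply z).symm
      rw [hz]
      refine ⟨P.e.symm z, ⟨?_, ?_, ?_⟩, rfl⟩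
      · exact Submodule.mem_sup_left Submodule.mem_top
      · exact Submodule.mem_sup_left Submodule.mem_top
      · rw [Nat.zero_sub, P.Vsub_zero]
        exact Submodule.mem_top
    | succ k ih =>
      refine Submodule.span_le.2 ?_
      rintro _ ⟨D, hD, w, hw, rfl⟩
      exact step k D hD w (ih hw)
  refine ⟨N, by omega, ?_⟩
  rw [eq_bot_iff]
  refine le_trans (main N) ?_
  intro z hz
  obtain ⟨a, b, c, ha, hb, hc, rfl⟩ := P.Sf_elim hz
  have hXN : Xf g1 K1 N = ⊥ := by
    simp only [Xf]
    rw [derPow_eq_bot_of_le hb1 (by omega : m1' ≤ N)]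
    have h2 : N - K1 = M := by omega
    rw [h2, hbM1]
    simp
  have hYN : Xf g2 K1 N = ⊥ := by
    simp only [Xf]
    rw [derPow_eq_bot_of_le hb2 (by omega : m2' ≤ N)]
    have h2 : N - K1 = M := by omega
    rw [h2, hbM2]
    simp
  have hVN : P.Vsub (N - M) = ⊥ := P.Vsub_bot hb1 hb2 (by omega)
  have ha0 : a = 0 := by rw [hXN] at ha; simpa using ha
  have hb0 : b = 0 := by rw [hYN] at hb; simpa using hb
  have hc0 : c = 0 := by rw [hVN] at hc; simpa using hc
  have hz0 : P.e (0, 0, 0) = 0 := by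
    have h : ((0 : g1), (0 : g2), (0 : Fin P.n1 → Fin P.n2 → ℂ)) = 0 := rfl
    rw [h, map_zero]
  rw [ha0, hb0, hc0, hz0]
  exact Submodule.zero_mem _

end IsProductByGenerators
namespace IsProductByGenerators

open Submodule LieAlgebra Module

variable {L g1 g2 : Type*} [LieRing L] [LieAlgebra ℂ L]
  [LieRing g1] [LieAlgebra ℂ g1] [LieRing g2] [LieAlgebra ℂ g2]
  (P : IsProductByGenerators L g1 g2)

theorem Φ_entry (i : Fin P.m1) (i0 : Fin P.n1) (j0 : Fin P.n2) (j : Fin P.m2)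
    (hj : (j : ℕ) = (j0 : ℕ)) :
    P.Φ (P.b1 i) (P.b2 j) i0 j0 =
      if i = ⟨i0, lt_of_lt_of_le i0.2 P.n1_le⟩ then 1 else 0 := by
  rw [P.hΦ]
  by_cases h : (i : ℕ) < P.n1
  · have hj2 : (j : ℕ) < P.n2 := by rw [hj]; exact j0.2
    rw [dif_pos ⟨h, hj2⟩]
    rw [Pi.single_apply, apply_ite (fun w : Fin P.n2 → ℂ => w j0), Pi.single_apply]
    have e1 : (i0 = (⟨↑i, h⟩ : Fin P.n1)) = (i = (⟨↑i0, lt_of_lt_of_le i0.2 P.n1_le⟩ : Fin P.m1)) := by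
      apply propext
      simp only [Fin.ext_iff, Fin.val_mk]
      omega
    have e2 : (j0 = (⟨↑j, hj2⟩ : Fin P.n2)) = True := by
      simp [Fin.ext_iff, hj]
    simp [e1, e2]
  · rw [dif_neg fun hc => h hc.1]
    rw [if_neg fun hc => h (by rw [hc]; exact i0.2)]
    rfl

theorem repr_eq_zero_of_Φ_eq_zero {u : g1} (hu : P.Φ u = 0) (i0 : Fin P.n1) :
    P.b1.repr u ⟨i0, lt_of_lt_of_le i0.2 P.n1_le⟩ = 0 := by
  classical
  have hsum := P.b1.sum_repr u
  have hj0 : (0 : ℕ) < P.n2 := by have := P.two_le_n2; omega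
  have hc := congrArg (fun w : g1 =>
    P.Φ w (P.b2 ⟨(⟨0, hj0⟩ : Fin P.n2), lt_of_lt_of_le hj0 P.n2_le⟩) i0 ⟨0, hj0⟩) hsum
  simp only [map_sum, map_smul, LinearMap.sum_apply, LinearMap.smul_apply,
    Finset.sum_apply, Pi.smul_apply, smul_eq_mul] at hc
  rw [hu] at hc
  simp only [P.Φ_entry, mul_ite, mul_one, mul_zero, Finset.sum_ite_eq',
    Finset.mem_univ, if_true, LinearMap.zero_apply, Pi.zero_apply] at hc
  exact hc

theorem kerPhi1 [FiniteDimensional ℂ g1] {u : g1} (hu : P.Φ u = 0) :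
    u ∈ ((LieAlgebra.derivedSeries ℂ g1 1).toSubmodule : Submodule ℂ g1) := by
  classical
  let ρ : g1 →ₗ[ℂ] (Fin P.n1 → ℂ) :=
    { toFun := fun w i0 => P.b1.repr w ⟨i0, lt_of_lt_of_le i0.2 P.n1_le⟩
      map_add' := by intro a b; funext i0; simp
      map_smul' := by intro c a; funext i0; simp }
  have hρ : ∀ (w : g1) (a : Fin P.n1), ρ w a = P.b1.repr w ⟨a, lt_of_lt_of_le a.2 P.n1_le⟩ :=
    fun w a => rfl
  have hρu : ρ u = 0 := funext fun i0 => P.repr_eq_zero_of_Φ_eq_zero hu i0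
  have hC1ker : ((LieAlgebra.derivedSeries ℂ g1 1).toSubmodule : Submodule ℂ g1) ≤
      LinearMap.ker ρ := by
    intro w hw
    have hw2 := P.adapted1 hw
    rw [Basis.mem_span_image] at hw2
    rw [LinearMap.mem_ker]
    funext i0
    show P.b1.repr w ⟨i0, lt_of_lt_of_le i0.2 P.n1_le⟩ = 0
    by_contra hne
    have hmem : (⟨i0, lt_of_lt_of_le i0.2 P.n1_le⟩ : Fin P.m1) ∈ (P.b1.repr w).support :=
      Finsupp.mem_support_iff.2 hne
    have h3 := hw2 hmem
    simp only [Set.mem_setOf_eq] at h3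
    have := i0.2
    omega
  have hsur : LinearMap.range ρ = ⊤ := by
    rw [eq_top_iff]
    intro w _
    have hw : w = ∑ i0, w i0 • (Pi.single i0 (1 : ℂ) : Fin P.n1 → ℂ) := by
      funext a
      simp [Pi.single_apply, Finset.sum_ite_eq', mul_ite]
    rw [hw]
    refine Submodule.sum_mem _ fun i0 _ => Submodule.smul_mem _ _ ?_
    refine ⟨P.b1 ⟨i0, lt_of_lt_of_le i0.2 P.n1_le⟩, ?_⟩
    funext a
    rw [hρ, Basis.repr_self, Finsupp.single_apply, Pi.single_apply]
    simp [Fin.ext_iff, eq_comm]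
  have hrank := LinearMap.finrank_range_add_finrank_ker ρ
  rw [hsur, finrank_top, Module.finrank_fin_fun] at hrank
  have hdim : finrank ℂ g1 = P.m1 := by
    rw [finrank_eq_card_basis P.b1, Fintype.card_fin]
  have hgen : finrank ℂ (span ℂ (⇑P.b1 '' {i : Fin P.m1 | (i : ℕ) < P.n1})) ≤ P.n1 := by
    have hseteq : ⇑P.b1 '' {i : Fin P.m1 | (i : ℕ) < P.n1} =
        Set.range (fun i0 : Fin P.n1 => P.b1 ⟨i0, lt_of_lt_of_le i0.2 P.n1_le⟩) := by
      ext w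
      constructor
      · rintro ⟨i, hi, rfl⟩
        exact ⟨⟨i, hi⟩, congrArg P.b1 (Fin.eta i (lt_of_lt_of_le hi P.n1_le))⟩
      · rintro ⟨i0, rfl⟩
        exact ⟨⟨i0, lt_of_lt_of_le i0.2 P.n1_le⟩, i0.2, rfl⟩
    rw [hseteq]
    have h := finrank_range_le_card (R := ℂ)
      (fun i0 : Fin P.n1 => P.b1 ⟨i0, lt_of_lt_of_le i0.2 P.n1_le⟩)
    simpa [Set.finrank] using h
  have hC1dim : P.m1 ≤ P.n1 +
      finrank ℂ ((LieAlgebra.derivedSeries ℂ g1 1).toSubmodule : Submodule ℂ g1) := by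
    have h1 := Submodule.finrank_sup_add_finrank_inf_eq
      (span ℂ (⇑P.b1 '' {i : Fin P.m1 | (i : ℕ) < P.n1}))
      ((LieAlgebra.derivedSeries ℂ g1 1).toSubmodule)
    rw [P.gen1, finrank_top, hdim] at h1
    omega
  have hker_le : finrank ℂ (LinearMap.ker ρ) ≤
      finrank ℂ ((LieAlgebra.derivedSeries ℂ g1 1).toSubmodule : Submodule ℂ g1) := by
    omega
  have heq := eq_of_le_of_finrank_le hC1ker hker_le
  rw [heq]
  exact LinearMap.mem_ker.2 hρu

theorem kerPhi2 [FiniteDimensional ℂ g2] {u : g2} (hu : ∀ x : g1, P.Φ x u = 0) :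
    u ∈ ((LieAlgebra.derivedSeries ℂ g2 1).toSubmodule : Submodule ℂ g2) := by
  refine P.swap.kerPhi1 ?_
  show P.ΦSwap u = 0
  apply LinearMap.ext
  intro x
  rw [P.ΦSwap_apply, hu x, map_zero]
  rfl

end IsProductByGenerators
namespace IsProductByGenerators

open Submodule LieAlgebra Module

variable {L g1 g2 : Type*} [LieRing L] [LieAlgebra ℂ L]
  [LieRing g1] [LieAlgebra ℂ g1] [LieRing g2] [LieAlgebra ℂ g2]
  (P : IsProductByGenerators L g1 g2)

theorem Φ_entry' (i : Fin P.m1) (j : Fin P.m2) (r : Fin P.n1) (s : Fin P.n2) :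
    P.Φ (P.b1 i) (P.b2 j) r s =
      if i = ⟨r, lt_of_lt_of_le r.2 P.n1_le⟩ then
        (if (j : ℕ) = (s : ℕ) then 1 else 0) else 0 := by
  rw [P.hΦ]
  by_cases h : (i : ℕ) < P.n1 ∧ (j : ℕ) < P.n2
  · rw [dif_pos h, Pi.single_apply, apply_ite (fun w : Fin P.n2 → ℂ => w s), Pi.single_apply]
    have e1 : (r = (⟨↑i, h.1⟩ : Fin P.n1)) =
        (i = (⟨↑r, lt_of_lt_of_le r.2 P.n1_le⟩ : Fin P.m1)) := by
      apply propext
      simp only [Fin.ext_iff, Fin.val_mk]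
      omega
    have e2 : (s = (⟨↑j, h.2⟩ : Fin P.n2)) = ((j : ℕ) = (s : ℕ)) := by
      apply propext
      simp only [Fin.ext_iff, Fin.val_mk]
      omega
    simp [e1, e2]
  · rw [dif_neg h]
    rcases Decidable.not_and_iff_or_not.1 h with h1 | h2
    · rw [if_neg (fun hc => h1 (by rw [hc]; exact r.2))]
      rfl
    · have hjs : ((j : ℕ) = (s : ℕ)) = False := by
        have := s.2
        simp only [eq_iff_iff, iff_false]
        omega
      simp [hjs]

theorem Φ_left_expand (α : g1) (j : Fin P.m2) (r : Fin P.n1) (s : Fin P.n2) :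
    P.Φ α (P.b2 j) r s = P.b1.repr α ⟨r, lt_of_lt_of_le r.2 P.n1_le⟩ *
      (if (j : ℕ) = (s : ℕ) then 1 else 0) := by
  classical
  have hsum := P.b1.sum_repr α
  have hcc := congrArg (fun w : g1 => P.Φ w (P.b2 j) r s) hsum
  simp only [map_sum, map_smul, LinearMap.sum_apply, LinearMap.smul_apply,
    Finset.sum_apply, Pi.smul_apply, smul_eq_mul] at hcc
  rw [← hcc]
  simp only [P.Φ_entry', mul_ite, mul_zero, Finset.sum_ite_eq', Finset.mem_univ, if_true]

theorem Φ_right_expand (i : Fin P.m1) (β : g2) (r : Fin P.n1) (s : Fin P.n2) :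
    P.Φ (P.b1 i) β r s =
      (if i = ⟨r, lt_of_lt_of_le r.2 P.n1_le⟩ then 1 else 0) *
        P.b2.repr β ⟨s, lt_of_lt_of_le s.2 P.n2_le⟩ := by
  classical
  have hsum := P.b2.sum_repr β
  have hcc := congrArg (fun w : g2 => P.Φ (P.b1 i) w r s) hsum
  simp only [map_sum, map_smul, LinearMap.sum_apply, LinearMap.smul_apply,
    Finset.sum_apply, Pi.smul_apply, smul_eq_mul] at hcc
  rw [← hcc]
  by_cases hir : i = (⟨↑r, lt_of_lt_of_le r.2 P.n1_le⟩ : Fin P.m1)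
  · simp only [P.Φ_entry', hir, if_true]
    have e3 : ∀ j : Fin P.m2, ((j : ℕ) = (s : ℕ)) =
        (j = (⟨↑s, lt_of_lt_of_le s.2 P.n2_le⟩ : Fin P.m2)) := by
      intro j
      apply propext
      simp only [Fin.ext_iff, Fin.val_mk]
    simp only [e3, mul_ite, mul_one, mul_zero, Finset.sum_ite_eq', Finset.mem_univ,
      if_true, one_mul]
  · simp [P.Φ_entry', hir]

section Centroid

variable {π : L →ₗ[ℂ] L}

theorem cent_i1_i1 (hc : ∀ z w : L, π ⁅z, w⁆ = ⁅π z, w⁆) (x x' : g1) :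
    P.c11 π ⁅x, x'⁆ = ⁅P.c11 π x, x'⁆ ∧ P.c21 π ⁅x, x'⁆ = 0 := by
  have h := hc (P.i1 x) (P.i1 x')
  rw [P.lie_i1_i1, P.T_i1, P.T_i1, P.i1_apply, P.bracket_eq] at h
  have ht := P.e.injective h
  constructor
  · have h1 := congrArg (fun t : g1 × g2 × (Fin P.n1 → Fin P.n2 → ℂ) => t.1) ht
    simpa using h1
  · have h1 := congrArg (fun t : g1 × g2 × (Fin P.n1 → Fin P.n2 → ℂ) => t.2.1) ht
    simpa using h1

theorem cent_i2_i2 (hc : ∀ z w : L, π ⁅z, w⁆ = ⁅π z, w⁆) (y y' : g2) :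
    P.c22 π ⁅y, y'⁆ = ⁅P.c22 π y, y'⁆ ∧ P.c12 π ⁅y, y'⁆ = 0 := by
  have h := hc (P.i2 y) (P.i2 y')
  rw [P.lie_i2_i2, P.T_i2, P.T_i2, P.i2_apply, P.bracket_eq] at h
  have ht := P.e.injective h
  constructor
  · have h1 := congrArg (fun t : g1 × g2 × (Fin P.n1 → Fin P.n2 → ℂ) => t.2.1) ht
    simpa using h1
  · have h1 := congrArg (fun t : g1 × g2 × (Fin P.n1 → Fin P.n2 → ℂ) => t.1) ht
    simpa using h1

theorem cent_i1_i2 (hc : ∀ z w : L, π ⁅z, w⁆ = ⁅π z, w⁆) (x : g1) (y : g2) :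
    P.c13 π (P.Φ x y) = 0 ∧ P.c23 π (P.Φ x y) = ⁅P.c21 π x, y⁆ ∧
      P.c33 π (P.Φ x y) = P.Φ (P.c11 π x) y := by
  have h := hc (P.i1 x) (P.i2 y)
  rw [P.lie_i1_i2, P.T_i3, P.T_i1, P.i2_apply, P.bracket_eq] at h
  have ht := P.e.injective h
  refine ⟨?_, ?_, ?_⟩
  · have h1 := congrArg (fun t : g1 × g2 × (Fin P.n1 → Fin P.n2 → ℂ) => t.1) ht
    simpa using h1
  · have h1 := congrArg (fun t : g1 × g2 × (Fin P.n1 → Fin P.n2 → ℂ) => t.2.1) ht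
    simpa using h1
  · have h1 := congrArg (fun t : g1 × g2 × (Fin P.n1 → Fin P.n2 → ℂ) => t.2.2) ht
    simpa using h1

theorem cent'_i1_i2 (hc' : ∀ z w : L, π ⁅z, w⁆ = ⁅z, π w⁆) (x : g1) (y : g2) :
    P.c13 π (P.Φ x y) = ⁅x, P.c12 π y⁆ ∧ P.c23 π (P.Φ x y) = 0 ∧
      P.c33 π (P.Φ x y) = P.Φ x (P.c22 π y) := by
  have h := hc' (P.i1 x) (P.i2 y)
  rw [P.lie_i1_i2, P.T_i3, P.T_i2, P.i1_apply, P.bracket_eq] at h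
  have ht := P.e.injective h
  refine ⟨?_, ?_, ?_⟩
  · have h1 := congrArg (fun t : g1 × g2 × (Fin P.n1 → Fin P.n2 → ℂ) => t.1) ht
    simpa using h1
  · have h1 := congrArg (fun t : g1 × g2 × (Fin P.n1 → Fin P.n2 → ℂ) => t.2.1) ht
    simpa using h1
  · have h1 := congrArg (fun t : g1 × g2 × (Fin P.n1 → Fin P.n2 → ℂ) => t.2.2) ht
    simpa using h1

theorem cent_c13_zero (hc : ∀ z w : L, π ⁅z, w⁆ = ⁅π z, w⁆) (v) : P.c13 π v = 0 := by
  have hmem := mem_of_single_mem (LinearMap.ker (P.c13 π)) ?_ v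
  · exact LinearMap.mem_ker.1 hmem
  · intro i j
    rw [LinearMap.mem_ker, P.single_eq_Φ i j]
    exact (P.cent_i1_i2 hc _ _).1

theorem cent_c23_zero (hc' : ∀ z w : L, π ⁅z, w⁆ = ⁅z, π w⁆) (v) : P.c23 π v = 0 := by
  have hmem := mem_of_single_mem (LinearMap.ker (P.c23 π)) ?_ v
  · exact LinearMap.mem_ker.1 hmem
  · intro i j
    rw [LinearMap.mem_ker, P.single_eq_Φ i j]
    exact (P.cent'_i1_i2 hc' _ _).2.1

theorem cent_scalar (hc : ∀ z w : L, π ⁅z, w⁆ = ⁅π z, w⁆)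
    (hc' : ∀ z w : L, π ⁅z, w⁆ = ⁅z, π w⁆) :
    ∃ lam : ℂ, ∀ v, P.c33 π v = lam • v := by
  classical
  have key : ∀ (i0 : Fin P.n1) (j0 : Fin P.n2) (r : Fin P.n1) (s : Fin P.n2),
      P.b1.repr (P.c11 π (P.b1 ⟨i0, lt_of_lt_of_le i0.2 P.n1_le⟩))
          ⟨r, lt_of_lt_of_le r.2 P.n1_le⟩ *
        (if ((⟨↑j0, lt_of_lt_of_le j0.2 P.n2_le⟩ : Fin P.m2) : ℕ) = (s : ℕ) then 1 else 0) =
      (if (⟨↑i0, lt_of_lt_of_le i0.2 P.n1_le⟩ : Fin P.m1) =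
          ⟨r, lt_of_lt_of_le r.2 P.n1_le⟩ then 1 else 0) *
        P.b2.repr (P.c22 π (P.b2 ⟨j0, lt_of_lt_of_le j0.2 P.n2_le⟩))
          ⟨s, lt_of_lt_of_le s.2 P.n2_le⟩ := by
    intro i0 j0 r s
    have hAB : P.Φ (P.c11 π (P.b1 ⟨i0, lt_of_lt_of_le i0.2 P.n1_le⟩))
        (P.b2 ⟨j0, lt_of_lt_of_le j0.2 P.n2_le⟩) =
        P.Φ (P.b1 ⟨i0, lt_of_lt_of_le i0.2 P.n1_le⟩)
          (P.c22 π (P.b2 ⟨j0, lt_of_lt_of_le j0.2 P.n2_le⟩)) :=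
      ((P.cent_i1_i2 hc _ _).2.2).symm.trans (P.cent'_i1_i2 hc' _ _).2.2
    have hh := congrArg (fun w : Fin P.n1 → Fin P.n2 → ℂ => w r s) hAB
    rwa [P.Φ_left_expand, P.Φ_right_expand] at hh
  set lam1 : Fin P.n1 → ℂ := fun i0 =>
    P.b1.repr (P.c11 π (P.b1 ⟨i0, lt_of_lt_of_le i0.2 P.n1_le⟩))
      ⟨i0, lt_of_lt_of_le i0.2 P.n1_le⟩ with hlam1
  set lam2 : Fin P.n2 → ℂ := fun j0 =>
    P.b2.repr (P.c22 π (P.b2 ⟨j0, lt_of_lt_of_le j0.2 P.n2_le⟩))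
      ⟨j0, lt_of_lt_of_le j0.2 P.n2_le⟩ with hlam2
  have h0n1 : (0 : ℕ) < P.n1 := by have := P.two_le_n1; omega
  have h0n2 : (0 : ℕ) < P.n2 := by have := P.two_le_n2; omega
  have hdiag : ∀ i0 j0, lam1 i0 = lam2 j0 := by
    intro i0 j0
    have := key i0 j0 i0 j0
    simpa using this
  set lam : ℂ := lam1 ⟨0, h0n1⟩ with hlam
  have hlam1c : ∀ i0, lam1 i0 = lam := by
    intro i0
    rw [hdiag i0 ⟨0, h0n2⟩, hlam, hdiag ⟨0, h0n1⟩ ⟨0, h0n2⟩]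
  have hoff : ∀ (i0 r : Fin P.n1), (i0 : ℕ) ≠ (r : ℕ) →
      P.b1.repr (P.c11 π (P.b1 ⟨i0, lt_of_lt_of_le i0.2 P.n1_le⟩))
        ⟨r, lt_of_lt_of_le r.2 P.n1_le⟩ = 0 := by
    intro i0 r hne
    have hkey := key i0 ⟨0, h0n2⟩ r ⟨0, h0n2⟩
    simp only [Fin.val_mk, eq_self_iff_true, if_true, mul_one] at hkey
    rw [hkey, if_neg, zero_mul]
    intro hcn
    apply hne
    have h2 := congrArg Fin.val hcn
    simpa using h2
  have hE : ∀ (i0 : Fin P.n1) (j0 : Fin P.n2),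
      P.c33 π (Pi.single i0 (Pi.single j0 (1 : ℂ))) =
        lam • (Pi.single i0 (Pi.single j0 (1 : ℂ)) : Fin P.n1 → Fin P.n2 → ℂ) := by
    intro i0 j0
    have h2 : P.c33 π (Pi.single i0 (Pi.single j0 (1 : ℂ))) =
        P.Φ (P.c11 π (P.b1 ⟨i0, lt_of_lt_of_le i0.2 P.n1_le⟩))
          (P.b2 ⟨j0, lt_of_lt_of_le j0.2 P.n2_le⟩) := by
      conv_lhs => rw [P.single_eq_Φ i0 j0]
      exact (P.cent_i1_i2 hc _ _).2.2
    rw [h2]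
    funext r s
    rw [P.Φ_left_expand]
    simp only [Pi.smul_apply, smul_eq_mul, Fin.val_mk]
    rcases eq_or_ne (i0 : ℕ) (r : ℕ) with hir | hir
    · have hi0r : i0 = r := Fin.ext hir
      subst hi0r
      have h1 : P.b1.repr (P.c11 π (P.b1 ⟨i0, lt_of_lt_of_le i0.2 P.n1_le⟩))
          ⟨i0, lt_of_lt_of_le i0.2 P.n1_le⟩ = lam := hlam1c i0
      rw [h1]
      by_cases hjs : (j0 : ℕ) = (s : ℕ)
      · simp [Pi.single_apply, Fin.ext_iff, hjs, eq_comm]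
      · simp [Pi.single_apply, Fin.ext_iff, hjs, Ne.symm hjs]
    · rw [hoff i0 r hir, zero_mul]
      simp [Pi.single_apply, Fin.ext_iff, Ne.symm hir]
  refine ⟨lam, fun v => ?_⟩
  have hmem := mem_of_single_mem
    (LinearMap.ker (P.c33 π - lam • (LinearMap.id : (Fin P.n1 → Fin P.n2 → ℂ) →ₗ[ℂ] _)))
    ?_ v
  · have := LinearMap.mem_ker.1 hmem
    rw [LinearMap.sub_apply, LinearMap.smul_apply, LinearMap.id_apply, sub_eq_zero] at this
    exact this
  · intro i j
    rw [LinearMap.mem_ker, LinearMap.sub_apply, LinearMap.smul_apply, LinearMap.id_apply,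
      sub_eq_zero]
    exact hE i j

end Centroid

end IsProductByGenerators
namespace IsProductByGenerators

open Submodule LieAlgebra Module

variable {L g1 g2 : Type*} [LieRing L] [LieAlgebra ℂ L]
  [LieRing g1] [LieAlgebra ℂ g1] [LieRing g2] [LieAlgebra ℂ g2]
  (P : IsProductByGenerators L g1 g2)

variable {π : L →ₗ[ℂ] L}

theorem cent_c21_C1 (hc : ∀ z w : L, π ⁅z, w⁆ = ⁅π z, w⁆) :
    ∀ x ∈ ((LieAlgebra.derivedSeries ℂ g1 1).toSubmodule : Submodule ℂ g1),
      P.c21 π x = 0 := by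
  intro x hx
  rw [C1_eq_span] at hx
  have h := map_mem_of_span (P.c21 π) _ (⊥ : Submodule ℂ g2) ?_ x hx
  · simpa using h
  · rintro _ ⟨a, b, rfl⟩
    simp [(P.cent_i1_i1 hc a b).2]

theorem cent_c12_C1 (hc : ∀ z w : L, π ⁅z, w⁆ = ⁅π z, w⁆) :
    ∀ y ∈ ((LieAlgebra.derivedSeries ℂ g2 1).toSubmodule : Submodule ℂ g2),
      P.c12 π y = 0 := by
  intro y hy
  rw [C1_eq_span] at hy
  have h := map_mem_of_span (P.c12 π) _ (⊥ : Submodule ℂ g1) ?_ y hy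
  · simpa using h
  · rintro _ ⟨a, b, rfl⟩
    simp [(P.cent_i2_i2 hc a b).2]

theorem cent_zero [FiniteDimensional ℂ g1] [FiniteDimensional ℂ g2]
    [LieRing.IsNilpotent g1] [LieRing.IsNilpotent g2]
    (hc : ∀ z w : L, π ⁅z, w⁆ = ⁅π z, w⁆) (hc' : ∀ z w : L, π ⁅z, w⁆ = ⁅z, π w⁆)
    (hidem : ∀ z, π (π z) = π z)
    (h33 : ∀ v, P.c33 π v = 0) : ∀ z, π z = 0 := by
  classical
  obtain ⟨K1, hK1⟩ := LieModule.IsNilpotent.nilpotent ℂ g1 g1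
  obtain ⟨K2, hK2⟩ := LieModule.IsNilpotent.nilpotent ℂ g2 g2
  have hf : ∀ x x', P.c11 π ⁅x, x'⁆ = ⁅P.c11 π x, x'⁆ := fun x x' => (P.cent_i1_i1 hc x x').1
  have hq : ∀ y y', P.c22 π ⁅y, y'⁆ = ⁅P.c22 π y, y'⁆ := fun y y' => (P.cent_i2_i2 hc y y').1
  have hfC1 : ∀ x, P.c11 π x ∈
      ((LieAlgebra.derivedSeries ℂ g1 1).toSubmodule : Submodule ℂ g1) := by
    intro x
    refine P.kerPhi1 ?_
    apply LinearMap.ext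
    intro y
    have h := (P.cent_i1_i2 hc x y).2.2
    rw [h33] at h
    rw [LinearMap.zero_apply]
    exact h.symm
  have hqC2 : ∀ y, P.c22 π y ∈
      ((LieAlgebra.derivedSeries ℂ g2 1).toSubmodule : Submodule ℂ g2) := by
    intro y
    refine P.kerPhi2 (fun x => ?_)
    have h := (P.cent'_i1_i2 hc' x y).2.2
    rw [h33] at h
    exact h.symm
  have fpow := centroid_pow_eq_zero (P.c11 π) hf hfC1 K1 hK1
  have qpow := centroid_pow_eq_zero (P.c22 π) hq hqC2 K2 hK2
  have hπ3 : ∀ v, π (P.i3 v) = 0 := by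
    intro v
    rw [P.T_i3, P.cent_c13_zero hc, P.cent_c23_zero hc', h33]
    have h : ((0 : g1), (0 : g2), (0 : Fin P.n1 → Fin P.n2 → ℂ)) = 0 := rfl
    rw [h, map_zero]
  have hexp1 : ∀ x : g1,
      π (P.i1 x) = P.i1 (P.c11 π x) + P.i2 (P.c21 π x) + P.i3 (P.c31 π x) := by
    intro x
    rw [P.T_i1, ← P.sum_eq]
  have hexp2 : ∀ y : g2,
      π (P.i2 y) = P.i1 (P.c12 π y) + P.i2 (P.c22 π y) + P.i3 (P.c32 π y) := by
    intro y
    rw [P.T_i2, ← P.sum_eq]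
  have eqs1 : ∀ x : g1,
      P.c11 π (P.c11 π x) + P.c12 π (P.c21 π x) = P.c11 π x ∧
      P.c21 π (P.c11 π x) + P.c22 π (P.c21 π x) = P.c21 π x ∧
      P.c31 π (P.c11 π x) + P.c32 π (P.c21 π x) = P.c31 π x := by
    intro x
    have h := hidem (P.i1 x)
    conv_lhs at h => rw [hexp1 x]
    rw [map_add, map_add, hπ3, add_zero, hexp1, hexp2, P.sum_eq, P.sum_eq, ← map_add,
      P.T_i1] at h
    have ht := P.e.injective h
    refine ⟨?_, ?_, ?_⟩
    · have h1 := congrArg (fun t : g1 × g2 × (Fin P.n1 → Fin P.n2 → ℂ) => t.1) ht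
      simpa using h1
    · have h1 := congrArg (fun t : g1 × g2 × (Fin P.n1 → Fin P.n2 → ℂ) => t.2.1) ht
      simpa using h1
    · have h1 := congrArg (fun t : g1 × g2 × (Fin P.n1 → Fin P.n2 → ℂ) => t.2.2) ht
      simpa using h1
  have eqs2 : ∀ y : g2,
      P.c11 π (P.c12 π y) + P.c12 π (P.c22 π y) = P.c12 π y ∧
      P.c21 π (P.c12 π y) + P.c22 π (P.c22 π y) = P.c22 π y ∧
      P.c31 π (P.c12 π y) + P.c32 π (P.c22 π y) = P.c32 π y := by
    intro y
    have h := hidem (P.i2 y)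
    conv_lhs at h => rw [hexp2 y]
    rw [map_add, map_add, hπ3, add_zero, hexp1, hexp2, P.sum_eq, P.sum_eq, ← map_add,
      P.T_i2] at h
    have ht := P.e.injective h
    refine ⟨?_, ?_, ?_⟩
    · have h1 := congrArg (fun t : g1 × g2 × (Fin P.n1 → Fin P.n2 → ℂ) => t.1) ht
      simpa using h1
    · have h1 := congrArg (fun t : g1 × g2 × (Fin P.n1 → Fin P.n2 → ℂ) => t.2.1) ht
      simpa using h1
    · have h1 := congrArg (fun t : g1 × g2 × (Fin P.n1 → Fin P.n2 → ℂ) => t.2.2) ht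
      simpa using h1
  have hg0 : ∀ x, P.c21 π x = 0 := by
    intro x
    have e2 := (eqs1 x).2.1
    rw [P.cent_c21_C1 hc _ (hfC1 x), zero_add] at e2
    exact fix_eq_zero (P.c22 π) K2 qpow e2
  have hp0 : ∀ y, P.c12 π y = 0 := by
    intro y
    have e2 := (eqs2 y).1
    rw [P.cent_c12_C1 hc _ (hqC2 y), add_zero] at e2
    exact fix_eq_zero (P.c11 π) K1 fpow e2
  have hf0 : ∀ x, P.c11 π x = 0 := by
    intro x
    have e2 := (eqs1 x).1
    rw [hg0 x, map_zero, add_zero] at e2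
    exact fix_eq_zero (P.c11 π) K1 fpow e2
  have hq0 : ∀ y, P.c22 π y = 0 := by
    intro y
    have e2 := (eqs2 y).2.1
    rw [hp0 y, map_zero, zero_add] at e2
    exact fix_eq_zero (P.c22 π) K2 qpow e2
  have hh0 : ∀ x, P.c31 π x = 0 := by
    intro x
    have e2 := (eqs1 x).2.2
    rw [hg0 x, hf0 x, map_zero, map_zero, add_zero] at e2
    exact e2.symm
  have hr0 : ∀ y, P.c32 π y = 0 := by
    intro y
    have e2 := (eqs2 y).2.2
    rw [hp0 y, hq0 y, map_zero, map_zero, add_zero] at e2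
    exact e2.symm
  intro z
  rw [P.decomp z, map_add, map_add, hexp1, hexp2, hπ3, hf0, hg0, hh0, hp0, hq0, hr0]
  simp

include P in
theorem nonsplit [FiniteDimensional ℂ g1] [FiniteDimensional ℂ g2]
    [LieRing.IsNilpotent g1] [LieRing.IsNilpotent g2] :
    LieAlgebra.Nonsplit ℂ L := by
  rintro ⟨I, J, hI, hJ, hIJ, hIJtop⟩
  have hdis : I.toSubmodule ⊓ J.toSubmodule = ⊥ := by
    rw [← LieSubmodule.inf_toSubmodule, hIJ]
    rfl
  have hcod : I.toSubmodule ⊔ J.toSubmodule = ⊤ := by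
    rw [← LieSubmodule.sup_toSubmodule, hIJtop]
    rfl
  have hcompl : IsCompl I.toSubmodule J.toSubmodule :=
    ⟨disjoint_iff.2 hdis, codisjoint_iff.2 hcod⟩
  set πI : L →ₗ[ℂ] L :=
    I.toSubmodule.subtype ∘ₗ Submodule.projectionOnto _ _ hcompl with hπIdef
  set πJ : L →ₗ[ℂ] L :=
    J.toSubmodule.subtype ∘ₗ Submodule.projectionOnto _ _ hcompl.symm with hπJdef
  have hIappl : ∀ z ∈ I, πI z = z := by
    intro z hz
    show (↑(Submodule.projectionOnto _ _ hcompl z) : L) = z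
    rw [show z = ((⟨z, hz⟩ : I.toSubmodule) : L) from rfl,
      Submodule.projectionOnto_apply_left hcompl]
  have hJappl : ∀ z ∈ J, πI z = 0 := by
    intro z hz
    show (↑(Submodule.projectionOnto _ _ hcompl z) : L) = 0
    rw [Submodule.projectionOnto_apply_of_mem_right hcompl hz]
    rfl
  have hJappl2 : ∀ z ∈ J, πJ z = z := by
    intro z hz
    show (↑(Submodule.projectionOnto _ _ hcompl.symm z) : L) = z
    rw [show z = ((⟨z, hz⟩ : J.toSubmodule) : L) from rfl,
      Submodule.projectionOnto_apply_left hcompl.symm]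
  have hIappl2 : ∀ z ∈ I, πJ z = 0 := by
    intro z hz
    show (↑(Submodule.projectionOnto _ _ hcompl.symm z) : L) = 0
    rw [Submodule.projectionOnto_apply_of_mem_right hcompl.symm hz]
    rfl
  have hmemI : ∀ z, πI z ∈ I := fun z =>
    (Submodule.projectionOnto _ _ hcompl z).2
  have hmemJ : ∀ z, πJ z ∈ J := fun z =>
    (Submodule.projectionOnto _ _ hcompl.symm z).2
  have hsum : ∀ z, πI z + πJ z = z := fun z =>
    Submodule.projection_add_projection_eq_self hcompl z
  have hcross : ∀ z w : L, z ∈ I → w ∈ J → ⁅z, w⁆ = 0 := by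
    intro z w hz hw
    have h1 : ⁅z, w⁆ ∈ I := by
      rw [← lie_skew]
      exact neg_mem (I.lie_mem hz)
    have h2 : ⁅z, w⁆ ∈ J := J.lie_mem hw
    have h3 : ⁅z, w⁆ ∈ I.toSubmodule ⊓ J.toSubmodule := ⟨h1, h2⟩
    rw [hdis] at h3
    simpa using h3
  have hcross2 : ∀ z w : L, z ∈ J → w ∈ I → ⁅z, w⁆ = 0 := by
    intro z w hz hw
    rw [← lie_skew, hcross w z hw hz, neg_zero]
  have key : ∀ z w : L, ⁅z, w⁆ = ⁅πI z, πI w⁆ + ⁅πJ z, πJ w⁆ := by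
    intro z w
    conv_lhs => rw [← hsum z, ← hsum w]
    rw [add_lie, lie_add, lie_add, hcross _ _ (hmemI z) (hmemJ w),
      hcross2 _ _ (hmemJ z) (hmemI w), add_zero, zero_add]
  have hbmemI : ∀ z w, ⁅πI z, πI w⁆ ∈ I := fun z w => I.lie_mem (hmemI w)
  have hbmemJ : ∀ z w, ⁅πJ z, πJ w⁆ ∈ J := fun z w => J.lie_mem (hmemJ w)
  have hIbr : ∀ z w : L, πI ⁅z, w⁆ = ⁅πI z, πI w⁆ := by
    intro z w
    rw [key z w, map_add, hIappl _ (hbmemI z w), hJappl _ (hbmemJ z w), add_zero]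
  have hJbr : ∀ z w : L, πJ ⁅z, w⁆ = ⁅πJ z, πJ w⁆ := by
    intro z w
    rw [key z w, map_add, hIappl2 _ (hbmemI z w), hJappl2 _ (hbmemJ z w), zero_add]
  have hcentI : ∀ z w : L, πI ⁅z, w⁆ = ⁅πI z, w⁆ := by
    intro z w
    rw [hIbr z w]
    conv_rhs => rw [← hsum w]
    rw [lie_add, hcross _ _ (hmemI z) (hmemJ w), add_zero]
  have hcentI' : ∀ z w : L, πI ⁅z, w⁆ = ⁅z, πI w⁆ := by
    intro z w
    rw [hIbr z w]
    conv_rhs => rw [← hsum z]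
    rw [add_lie, hcross2 _ _ (hmemJ z) (hmemI w), add_zero]
  have hcentJ : ∀ z w : L, πJ ⁅z, w⁆ = ⁅πJ z, w⁆ := by
    intro z w
    rw [hJbr z w]
    conv_rhs => rw [← hsum w]
    rw [lie_add, hcross2 _ _ (hmemJ z) (hmemI w), zero_add]
  have hcentJ' : ∀ z w : L, πJ ⁅z, w⁆ = ⁅z, πJ w⁆ := by
    intro z w
    rw [hJbr z w]
    conv_rhs => rw [← hsum z]
    rw [add_lie, hcross _ _ (hmemI z) (hmemJ w), zero_add]
  have hidemI : ∀ z, πI (πI z) = πI z := fun z => hIappl _ (hmemI z)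
  have hidemJ : ∀ z, πJ (πJ z) = πJ z := fun z => hJappl2 _ (hmemJ z)
  obtain ⟨lamI, hlamI⟩ := P.cent_scalar hcentI hcentI'
  obtain ⟨lamJ, hlamJ⟩ := P.cent_scalar hcentJ hcentJ'
  have hπI3 : ∀ v, πI (P.i3 v) = P.i3 (lamI • v) := by
    intro v
    rw [P.T_i3, P.cent_c13_zero hcentI, P.cent_c23_zero hcentI', hlamI]
    rfl
  have hπJ3 : ∀ v, πJ (P.i3 v) = P.i3 (lamJ • v) := by
    intro v
    rw [P.T_i3, P.cent_c13_zero hcentJ, P.cent_c23_zero hcentJ', hlamJ]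
    rfl
  have h0n1 : (0 : ℕ) < P.n1 := by have := P.two_le_n1; omega
  have h0n2 : (0 : ℕ) < P.n2 := by have := P.two_le_n2; omega
  set E00 : Fin P.n1 → Fin P.n2 → ℂ :=
    Pi.single ⟨0, h0n1⟩ (Pi.single ⟨0, h0n2⟩ (1 : ℂ)) with hE00
  have hmul : lamI * lamJ = 0 := by
    have h1 : πI (πJ (P.i3 E00)) = 0 := hJappl _ (hmemJ _)
    rw [hπJ3, hπI3] at h1
    have h2 : lamI • lamJ • E00 = 0 := by
      have h3 : P.i3 (lamI • lamJ • E00) = P.i3 0 := by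
        rw [h1, map_zero]
      have h4 := P.e.injective h3
      have h5 := congrArg (fun t : g1 × g2 × (Fin P.n1 → Fin P.n2 → ℂ) => t.2.2) h4
      simpa using h5
    have h6 := congrArg (fun w : Fin P.n1 → Fin P.n2 → ℂ => w ⟨0, h0n1⟩ ⟨0, h0n2⟩) h2
    simp only [hE00, Pi.smul_apply, Pi.single_apply, if_pos rfl, smul_eq_mul,
      Pi.zero_apply, mul_one] at h6
    simpa using h6
  rcases mul_eq_zero.1 hmul with h0 | h0
  · have hz := P.cent_zero hcentI hcentI' hidemI
      (fun v => by rw [hlamI, h0, zero_smul])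
    refine hI (LieSubmodule.eq_bot_iff I |>.2 ?_)
    intro m hm
    rw [← hIappl m hm]
    exact hz m
  · have hz := P.cent_zero hcentJ hcentJ' hidemJ
      (fun v => by rw [hlamJ, h0, zero_smul])
    refine hJ (LieSubmodule.eq_bot_iff J |>.2 ?_)
    intro m hm
    rw [← hJappl2 m hm]
    exact hz m

end IsProductByGenerators
/-- the product by generators of two characteristically nilpotent Lie
S-algebras is characteristically nilpotent and nonsplit. -/
theorem statement_15 (L g1 g2 : Type) [LieRing L] [LieAlgebra ℂ L]
    [LieRing g1] [LieAlgebra ℂ g1] [LieRing g2] [LieAlgebra ℂ g2]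
    [FiniteDimensional ℂ g1] [FiniteDimensional ℂ g2]
    [LieRing.IsNilpotent g1] [LieRing.IsNilpotent g2]
    (hcn1 : CharacteristicallyNilpotent g1) (hcn2 : CharacteristicallyNilpotent g2)
    (hS1 : IsSAlgebra g1) (hS2 : IsSAlgebra g2)
    (P : IsProductByGenerators L g1 g2) :
    CharacteristicallyNilpotent L ∧ LieAlgebra.Nonsplit ℂ L := by
  constructor
  · refine P.charNilpotent hcn1 hcn2 ?_ ?_
    · intro D hD x
      have h := hS1 g2 L _ _ _ _ P D hD x
      rw [← P.D21_eq_c21]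
      exact h
    · intro D hD y
      have h := hS2 g1 L _ _ _ _ P.swap D hD y
      rw [← P.swap_D21]
      exact h
  · exact P.nonsplit
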